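/- arXiv:1310.3147 — 4 statements merged into one kernel-verified Lean document; each statement's English description precedes it below -/
import Mathlib

section
/- The vector |R₀⟩ = √(2/7)(|0,1⟩ + |1,0⟩) − (1/√7)(|u₁⟩ + |u₂⟩ − |u₃⟩) is a unit eigenvector of the 5×5 triangle walk matrix U₀ with eigenvalue −1. -/
/-- The 5×5 triangle-walk matrix on ℂ⁵, basis order `|0,1⟩, |1,0⟩, |u₁⟩, |u₂⟩, |u₃⟩`. -/
noncomputable def triangleWalk : Matrix (Fin 5) (Fin 5) ℂ :=
  !![0, -1, 0, 0, 0;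
     -1/3, 0, 0, 2 * Real.sqrt 2 / 3, 0;
     2 * Real.sqrt 2 / 3, 0, 0, 1/3, 0;
     0, 0, 0, 0, 1;
     0, 0, 1, 0, 0]

/-- The eigenvector `|R₀⟩ = √(2/7)(|0,1⟩+|1,0⟩) − (1/√7)(|u₁⟩+|u₂⟩−|u₃⟩)`. -/
noncomputable def R0 : Fin 5 → ℂ :=
  ![Real.sqrt (2/7), Real.sqrt (2/7),
    -(1 / Real.sqrt 7), -(1 / Real.sqrt 7), 1 / Real.sqrt 7]

theorem stmt10 :
    dotProduct (star R0) R0 = 1 ∧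
    triangleWalk.mulVec R0 = (-1 : ℂ) • R0 := by
  have h7 : Real.sqrt 7 * Real.sqrt 7 = 7 := Real.mul_self_sqrt (by norm_num)
  have h7ne : Real.sqrt 7 ≠ 0 := by positivity
  have h2 : Real.sqrt 2 * Real.sqrt 2 = 2 := Real.mul_self_sqrt (by norm_num)
  have h7' : (Real.sqrt 7 : ℂ) * (Real.sqrt 7 : ℂ) = 7 := by
    rw [← Complex.ofReal_mul, h7]; norm_num
  have h2' : (Real.sqrt 2 : ℂ) * (Real.sqrt 2 : ℂ) = 2 := by
    rw [← Complex.ofReal_mul, h2]; norm_num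
  have h7ne' : (Real.sqrt 7 : ℂ) ≠ 0 := by exact_mod_cast h7ne
  constructor
  · simp [dotProduct, R0, Fin.sum_univ_five, Real.sqrt_div (by norm_num : (0:ℝ) ≤ 2) 7,
      Complex.star_def, ← Complex.ofReal_div]
    field_simp
    rw [Complex.ofReal_div, div_pow]
    field_simp
    linear_combination 2 * h2' - h7'
  · funext i
    fin_cases i <;>
      simp [triangleWalk, R0, Matrix.mulVec, dotProduct, Fin.sum_univ_five] <;>
      field_simp <;>
      first
      | linear_combination 2 * h2'
      | ring
end

section
/- The eigenvalue −1 of the 5×5 triangle walk matrix U₀ has geometric multiplicity 1, with eigenspace spanned by |R₀⟩ = √(2/7)(|0,1⟩ + |1,0⟩) − (1/√7)(|u₁⟩ + |u₂⟩ − |u₃⟩). -/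
lemma s2_ne : ((Real.sqrt 2 : ℝ) : ℂ) ≠ 0 := by
  exact_mod_cast (Real.sqrt_ne_zero'.mpr (by norm_num) : Real.sqrt 2 ≠ 0)

lemma s7_ne : ((Real.sqrt 7 : ℝ) : ℂ) ≠ 0 := by
  exact_mod_cast (Real.sqrt_ne_zero'.mpr (by norm_num) : Real.sqrt 7 ≠ 0)

lemma s2_sq : ((Real.sqrt 2 : ℝ) : ℂ) * ((Real.sqrt 2 : ℝ) : ℂ) = 2 := by
  have := Real.mul_self_sqrt (show (0:ℝ) ≤ 2 by norm_num)
  exact_mod_cast this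

lemma s27 : ((Real.sqrt (2/7) : ℝ) : ℂ) = ((Real.sqrt 2 : ℝ) : ℂ) / ((Real.sqrt 7 : ℝ) : ℂ) := by
  norm_cast
  rw [Real.sqrt_div (by norm_num : (0:ℝ) ≤ 2)]

lemma R0_ne : R0 ≠ 0 := by
  intro h
  simpa [R0] using congrFun h 4

theorem stmt12 :
    Module.End.eigenspace (Matrix.toLin' triangleWalk) (-1) = Submodule.span ℂ {R0} ∧
    Module.finrank ℂ (Module.End.eigenspace (Matrix.toLin' triangleWalk) (-1)) = 1 := by
  have hkey : Module.End.eigenspace (Matrix.toLin' triangleWalk) (-1) = Submodule.span ℂ {R0} := by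
    apply le_antisymm
    · intro v hv
      rw [Module.End.mem_eigenspace_iff, Matrix.toLin'_apply, funext_iff] at hv
      have h0 := hv 0
      have h1 := hv 1
      have h2 := hv 2
      have h3 := hv 3
      have h4 := hv 4
      simp [triangleWalk, Matrix.mulVec, dotProduct, Fin.sum_univ_five] at h0 h1 h2 h3 h4
      have hv3 : v 3 * ((Real.sqrt 2:ℝ):ℂ) = -v 0 := by
        linear_combination (3/2)*h1 - (3/2)*h0
      have hv2 : v 2 * ((Real.sqrt 2:ℝ):ℂ) = -v 0 := by
        linear_combination ((Real.sqrt 2:ℝ):ℂ)*h2 - (1/3)*hv3 - (2/3)*(v 0)*s2_sq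
      rw [Submodule.mem_span_singleton]
      refine ⟨v 0 * (Real.sqrt 7 : ℝ) / (Real.sqrt 2 : ℝ), ?_⟩
      funext i
      fin_cases i <;> simp [R0, s27, h0] <;> field_simp
      · linear_combination -hv2
      · linear_combination -hv3
      · linear_combination -((Real.sqrt 2:ℝ):ℂ)*h3 + hv3
    · rw [Submodule.span_le, Set.singleton_subset_iff, SetLike.mem_coe,
        Module.End.mem_eigenspace_iff, Matrix.toLin'_apply]
      funext i
      fin_cases i <;>
        simp [triangleWalk, R0, Matrix.mulVec, dotProduct, Fin.sum_univ_five, s27] <;>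
        field_simp <;>
        first
          | ring1
          | linear_combination (2:ℂ) * s2_sq
  exact ⟨hkey, by rw [hkey, finrank_span_singleton R0_ne]⟩
end

section
/- In the N-edge star graph walk, the uniform initial state |ψ_init⟩ = (1/√N)∑_{j=1}^N (α|0,j⟩ + β|j,0⟩) with |α|² + |β|² = 1 satisfies ‖ |ψ_init⟩ − (α|out⟩ + β|in⟩) ‖ ≤ 2√(2/N), where |in⟩ = (1/√(N−1))∑_{j=2}^N |j,0⟩ and |out⟩ = (1/√(N−1))∑_{j=2}^N |0,j⟩; i.e., the initial state is within O(1/√N) of a state supported on the left side. -/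
set_option maxHeartbeats 1000000
open Finset

lemma norm_sum_on {ι E : Type*} [NormedAddCommGroup E] [InnerProductSpace ℂ E]
    {v : ι → E} (hv : Orthonormal ℂ v) (s : Finset ι) :
    ‖∑ j ∈ s, v j‖ = Real.sqrt s.card := by
  rw [@norm_eq_sqrt_re_inner ℂ]
  congr 1
  have h : (∑ j ∈ s, v j) = ∑ j ∈ s, (1:ℂ) • v j := by simp
  rw [h, hv.inner_sum]
  simp

theorem stmt16 (N : ℕ) [NeZero N] (hN : 2 ≤ N) (α β : ℂ)
    (hαβ : ‖α‖ ^ 2 + ‖β‖ ^ 2 = 1) :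
    ‖((1 / Real.sqrt N : ℂ) •
        ∑ j : Fin N, (α • EuclideanSpace.single (Sum.inr j) (1 : ℂ) +
          β • EuclideanSpace.single (Sum.inl j) (1 : ℂ)) :
          EuclideanSpace ℂ (Fin N ⊕ Fin N)) -
      (α • ((1 / Real.sqrt (N - 1) : ℂ) •
          ∑ j ∈ Finset.univ.erase (0 : Fin N),
            EuclideanSpace.single (Sum.inr j) (1 : ℂ)) +
       β • ((1 / Real.sqrt (N - 1) : ℂ) •
          ∑ j ∈ Finset.univ.erase (0 : Fin N),
            EuclideanSpace.single (Sum.inl j) (1 : ℂ)))‖ ≤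
      2 * Real.sqrt (2 / N) := by
  have hN1 : (1:ℝ) ≤ (N:ℝ) - 1 := by
    have : (2:ℝ) ≤ N := by exact_mod_cast hN
    linarith
  have hNpos : (0:ℝ) < N := by positivity
  have hsN : 0 < Real.sqrt N := Real.sqrt_pos.2 hNpos
  have hsN1 : 0 < Real.sqrt ((N:ℝ) - 1) := Real.sqrt_pos.2 (by linarith)
  set c : ℝ := 1 / Real.sqrt N with hc
  set d : ℝ := 1 / Real.sqrt ((N:ℝ) - 1) with hd
  have hcpos : 0 < c := by positivity
  have hdpos : 0 < d := by positivity
  have hcd : c ≤ d := by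
    apply one_div_le_one_div_of_le hsN1
    exact Real.sqrt_le_sqrt (by linarith)
  set er : Fin N → EuclideanSpace ℂ (Fin N ⊕ Fin N) :=
    fun j => EuclideanSpace.single (Sum.inr j) (1 : ℂ) with her
  set el : Fin N → EuclideanSpace ℂ (Fin N ⊕ Fin N) :=
    fun j => EuclideanSpace.single (Sum.inl j) (1 : ℂ) with hel
  set Sr : EuclideanSpace ℂ (Fin N ⊕ Fin N) := ∑ j ∈ Finset.univ.erase (0 : Fin N), er j
  set Sl : EuclideanSpace ℂ (Fin N ⊕ Fin N) := ∑ j ∈ Finset.univ.erase (0 : Fin N), el j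
  have hsplit : ∑ j : Fin N, (α • er j + β • el j)
      = α • (er 0 + Sr) + β • (el 0 + Sl) := by
    rw [Finset.sum_add_distrib, ← Finset.smul_sum, ← Finset.smul_sum,
      ← Finset.add_sum_erase _ er (mem_univ 0), ← Finset.add_sum_erase _ el (mem_univ 0)]
  rw [hsplit,
    show ((1:ℂ)/(Real.sqrt N:ℂ)) = ((c:ℝ):ℂ) by push_cast [hc]; ring,
    show ((1:ℂ)/(Real.sqrt ((N:ℝ)-1):ℂ)) = ((d:ℝ):ℂ) by push_cast [hd]; ring]
  have hveq : (((c:ℂ)) • (α • (er 0 + Sr) + β • (el 0 + Sl)) -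
      (α • ((d:ℂ) • Sr) + β • ((d:ℂ) • Sl)))
      = α • ((c:ℂ) • er 0 + ((c:ℂ) - (d:ℂ)) • Sr)
        + β • ((c:ℂ) • el 0 + ((c:ℂ) - (d:ℂ)) • Sl) := by
    module
  rw [hveq]
  -- norms of the pieces
  have horthr : Orthonormal ℂ er :=
    (EuclideanSpace.orthonormal_single (𝕜 := ℂ) (ι := Fin N ⊕ Fin N)).comp _ Sum.inr_injective
  have horthl : Orthonormal ℂ el :=
    (EuclideanSpace.orthonormal_single (𝕜 := ℂ) (ι := Fin N ⊕ Fin N)).comp _ Sum.inl_injective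
  have hcard : ((Finset.univ.erase (0 : Fin N)).card : ℝ) = (N:ℝ) - 1 := by
    rw [Finset.card_erase_of_mem (mem_univ _), Finset.card_univ, Fintype.card_fin,
      Nat.cast_sub (by omega : 1 ≤ N)]
    simp
  have hSr : ‖Sr‖ = Real.sqrt ((N:ℝ) - 1) := by
    rw [norm_sum_on horthr, hcard]
  have hSl : ‖Sl‖ = Real.sqrt ((N:ℝ) - 1) := by
    rw [norm_sum_on horthl, hcard]
  have her0 : ‖er 0‖ = 1 := by simp [her, EuclideanSpace.norm_single]
  have hel0 : ‖el 0‖ = 1 := by simp [hel, EuclideanSpace.norm_single]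
  set K : ℝ := c + (d - c) * Real.sqrt ((N:ℝ) - 1) with hK
  have hnormc : ‖(c:ℂ)‖ = c := by
    rw [Complex.norm_real, Real.norm_of_nonneg hcpos.le]
  have hnormcd : ‖(c:ℂ) - (d:ℂ)‖ = d - c := by
    rw [← Complex.ofReal_sub, Complex.norm_real, Real.norm_eq_abs,
      abs_of_nonpos (by linarith)]
    ring
  have hpart : ∀ (x : EuclideanSpace ℂ (Fin N ⊕ Fin N)), ‖x‖ = 1 →
      ∀ (y : EuclideanSpace ℂ (Fin N ⊕ Fin N)), ‖y‖ = Real.sqrt ((N:ℝ) - 1) →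
      ‖(c:ℂ) • x + ((c:ℂ) - (d:ℂ)) • y‖ ≤ K := by
    intro x hx y hy
    calc ‖(c:ℂ) • x + ((c:ℂ) - (d:ℂ)) • y‖
        ≤ ‖(c:ℂ) • x‖ + ‖((c:ℂ) - (d:ℂ)) • y‖ := norm_add_le _ _
      _ = c * 1 + (d - c) * Real.sqrt ((N:ℝ) - 1) := by
          rw [norm_smul, norm_smul, hnormc, hnormcd, hx, hy]
      _ = K := by ring
  have hKbound : ‖α • ((c:ℂ) • er 0 + ((c:ℂ) - (d:ℂ)) • Sr)
      + β • ((c:ℂ) • el 0 + ((c:ℂ) - (d:ℂ)) • Sl)‖ ≤ (‖α‖ + ‖β‖) * K := by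
    calc ‖α • ((c:ℂ) • er 0 + ((c:ℂ) - (d:ℂ)) • Sr)
        + β • ((c:ℂ) • el 0 + ((c:ℂ) - (d:ℂ)) • Sl)‖
        ≤ ‖α • ((c:ℂ) • er 0 + ((c:ℂ) - (d:ℂ)) • Sr)‖
          + ‖β • ((c:ℂ) • el 0 + ((c:ℂ) - (d:ℂ)) • Sl)‖ := norm_add_le _ _
      _ ≤ ‖α‖ * K + ‖β‖ * K := by
          rw [norm_smul, norm_smul]
          gcongr
          · exact hpart _ her0 _ hSr
          · exact hpart _ hel0 _ hSl
      _ = (‖α‖ + ‖β‖) * K := by ring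
  refine hKbound.trans ?_
  -- numeric bounds
  have hab : ‖α‖ + ‖β‖ ≤ Real.sqrt 2 := by
    nlinarith [sq_nonneg (‖α‖ - ‖β‖), Real.sq_sqrt (by norm_num : (0:ℝ) ≤ 2),
      Real.sqrt_nonneg 2, norm_nonneg α, norm_nonneg β,
      sq_nonneg (‖α‖ + ‖β‖ - Real.sqrt 2), sq_nonneg (‖α‖ + ‖β‖ + Real.sqrt 2)]
  have hd1 : d * Real.sqrt ((N:ℝ) - 1) = 1 := by
    rw [hd, one_div, inv_mul_cancel₀ hsN1.ne']
  have hsqle : Real.sqrt N ≤ Real.sqrt ((N:ℝ) - 1) + 1 := by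
    have h1 : (N:ℝ) ≤ (Real.sqrt ((N:ℝ) - 1) + 1)^2 := by
      nlinarith [Real.sq_sqrt (by linarith : (0:ℝ) ≤ (N:ℝ) - 1), hsN1.le]
    calc Real.sqrt N ≤ Real.sqrt ((Real.sqrt ((N:ℝ) - 1) + 1)^2) := Real.sqrt_le_sqrt h1
      _ = Real.sqrt ((N:ℝ) - 1) + 1 := Real.sqrt_sq (by positivity)
  have hKle : K ≤ 2 * c := by
    have : c * Real.sqrt ((N:ℝ) - 1) = Real.sqrt ((N:ℝ) - 1) / Real.sqrt N := by
      rw [hc]; ring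
    have h2 : 1 - Real.sqrt ((N:ℝ) - 1) / Real.sqrt N ≤ 1 / Real.sqrt N := by
      rw [sub_le_iff_le_add, ← add_div, le_div_iff₀ hsN]
      linarith [hsqle]
    have hexp : K = c + 1 - Real.sqrt ((N:ℝ) - 1) / Real.sqrt N := by
      rw [hK, sub_mul, hd1, this]; ring
    rw [hexp, hc]
    linarith [h2]
  have hKnn : 0 ≤ K := by
    have : 0 ≤ (d - c) * Real.sqrt ((N:ℝ) - 1) := by
      apply mul_nonneg (by linarith) hsN1.le
    linarith
  have habnn : 0 ≤ ‖α‖ + ‖β‖ := by positivity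
  have hfinal : (‖α‖ + ‖β‖) * K ≤ Real.sqrt 2 * (2 * c) :=
    mul_le_mul hab hKle hKnn (Real.sqrt_nonneg 2)
  refine hfinal.trans_eq ?_
  rw [Real.sqrt_div (by norm_num : (0:ℝ) ≤ 2) (N:ℝ), hc]
  ring
end

section
/- The characteristic polynomial of the 5×5 triangle walk matrix U₀ has −1 as a simple root, and all roots of this characteristic polynomial have modulus 1. -/
open Polynomial Matrix

set_option maxHeartbeats 4000000 in
lemma charpoly_tw (a : ℂ) (ha : a * a = 8/9) :
    (!![0,-1,0,0,0; -1/3,0,0,a,0; a,0,0,1/3,0; 0,0,0,0,1; (0:ℂ),0,1,0,0]).charpoly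
    = X^5 - C (1/3) * X^3 - C (1/3) * X^2 + 1 := by
  rw [Matrix.charpoly]
  simp [Matrix.det_succ_row_zero, Fin.sum_univ_succ, charmatrix_apply, Matrix.one_apply,
    Fin.succAbove, Matrix.diagonal_apply]
  ring_nf
  rw [show (C a)^2 = C (8/9 : ℂ) by rw [sq, ← C_mul, ha]]
  have h1 : C (-1/3 : ℂ) = -C (1/3 : ℂ) := by rw [← map_neg]; norm_num
  have h2 : - C ((1:ℂ)/3 * (-1/3)) + C (8/9 : ℂ) = 1 := by
    rw [← map_neg, ← map_add]; norm_num
  have h3 : C ((1:ℂ)/3) * C ((-1:ℂ)/3) = C ((1:ℂ)/3 * (-1/3)) := (map_mul C _ _).symm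
  linear_combination (X:ℂ[X])^3 * h1 + h2 - h3

lemma quad_factor (y s : ℝ) (hs : s^2 = 4 - y^2) :
    ((X : ℂ[X]) - C ⟨y/2, s/2⟩) * (X - C ⟨y/2, -s/2⟩) = X^2 - C (y:ℂ) * X + 1 := by
  have hsum : (⟨y/2, s/2⟩ : ℂ) + ⟨y/2, -s/2⟩ = (y:ℂ) := by
    apply Complex.ext <;> simp [Complex.add_re, Complex.add_im] <;> ring
  have hprod : (⟨y/2, s/2⟩ : ℂ) * ⟨y/2, -s/2⟩ = 1 := by
    apply Complex.ext <;> simp [Complex.mul_re, Complex.mul_im] <;> nlinarith [hs]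
  have h1 : (1 : ℂ[X]) = C ((⟨y/2, s/2⟩ : ℂ) * ⟨y/2, -s/2⟩) := by rw [hprod, _root_.map_one]
  rw [h1, ← hsum, C_add, C_mul]; ring

lemma abs_mk_one (y s : ℝ) (hs : s^2 = 4 - y^2) : ‖(⟨y/2, s/2⟩ : ℂ)‖ = 1 := by
  rw [Complex.norm_def, Complex.normSq_mk,
    show y/2*(y/2) + s/2*(s/2) = 1 by nlinarith]
  exact Real.sqrt_one

noncomputable def rr : ℝ := Real.sqrt (19/3)
noncomputable def yy1 : ℝ := (1 + rr)/2
noncomputable def yy2 : ℝ := (1 - rr)/2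
noncomputable def ss1 : ℝ := Real.sqrt (4 - yy1^2)
noncomputable def ss2 : ℝ := Real.sqrt (4 - yy2^2)

lemma hr2 : rr^2 = 19/3 := Real.sq_sqrt (by norm_num)
lemma hr0 : 0 ≤ rr := Real.sqrt_nonneg _

lemma hy1pos : 0 < 4 - yy1^2 := by
  have h2 := hr2; have h0 := hr0
  unfold yy1; nlinarith [sq_nonneg (rr - 3)]
lemma hy2pos : 0 < 4 - yy2^2 := by
  have h2 := hr2; have h0 := hr0
  unfold yy2; nlinarith [sq_nonneg (rr - 3)]
lemma hs1 : ss1^2 = 4 - yy1^2 := Real.sq_sqrt hy1pos.le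
lemma hs2 : ss2^2 = 4 - yy2^2 := Real.sq_sqrt hy2pos.le
lemma hs1pos : 0 < ss1 := Real.sqrt_pos.mpr hy1pos
lemma hs2pos : 0 < ss2 := Real.sqrt_pos.mpr hy2pos

lemma hysum : (yy1 : ℂ) + yy2 = 1 := by
  have : yy1 + yy2 = 1 := by unfold yy1 yy2; ring
  exact_mod_cast this
lemma hyprod : (yy1 : ℂ) * yy2 = -4/3 := by
  have : yy1 * yy2 = -4/3 := by
    have h2 := hr2; unfold yy1 yy2; nlinarith
  exact_mod_cast this

lemma fac : (X:ℂ[X])^5 - C (1/3) * X^3 - C (1/3) * X^2 + 1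
    = (X - C (-1)) * (((X - C ⟨yy1/2, ss1/2⟩) * (X - C ⟨yy1/2, -ss1/2⟩)) *
      ((X - C ⟨yy2/2, ss2/2⟩) * (X - C ⟨yy2/2, -ss2/2⟩))) := by
  rw [quad_factor _ _ hs1, quad_factor _ _ hs2]
  have hsC : C (yy1:ℂ) + C (yy2:ℂ) = 1 := by rw [← C_add, hysum]; exact C_1
  have hpC : C (yy1:ℂ) * C (yy2:ℂ) = C (-4/3 : ℂ) := by rw [← C_mul, hyprod]
  have h23 : C (-4/3 : ℂ) + 2 = C (2/3 : ℂ) := by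
    rw [(map_ofNat C 2).symm, ← C_add]; norm_num
  have hq : ((X:ℂ[X])^2 - C (yy1:ℂ) * X + 1) * (X^2 - C (yy2:ℂ) * X + 1)
      = X^4 - X^3 + C (2/3 : ℂ)*X^2 - X + 1 := by
    linear_combination (-(X:ℂ[X])^3 - X) * hsC + (X:ℂ[X])^2 * hpC + (X:ℂ[X])^2 * h23
  rw [hq]
  have hC1 : C (-1 : ℂ) = -1 := by simp
  have hD : C ((2:ℂ)/3) + C ((1:ℂ)/3) = 1 := by rw [← C_add]; norm_num
  linear_combination ((X:ℂ[X])^4 - X^3 + C (2/3 : ℂ)*X^2 - X + 1) * hC1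
    + (-((X:ℂ[X])^3 + X^2)) * hD

lemma tw_fac : triangleWalk.charpoly
    = (X - C (-1)) * (((X - C ⟨yy1/2, ss1/2⟩) * (X - C ⟨yy1/2, -ss1/2⟩)) *
      ((X - C ⟨yy2/2, ss2/2⟩) * (X - C ⟨yy2/2, -ss2/2⟩))) := by
  have h2 : ((Real.sqrt 2 : ℝ) : ℂ) * ((Real.sqrt 2 : ℝ) : ℂ) = 2 := by
    rw [← Complex.ofReal_mul, Real.mul_self_sqrt (by norm_num)]; norm_num
  have ha : (2 * (Real.sqrt 2 : ℂ) / 3) * (2 * (Real.sqrt 2 : ℂ) / 3) = 8/9 := by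
    linear_combination (4/9 : ℂ) * h2
  have hcp := charpoly_tw (2 * (Real.sqrt 2 : ℂ) / 3) ha
  unfold triangleWalk
  rw [hcp, fac]

lemma tw_roots : triangleWalk.charpoly.roots
    = {-1} + (({(⟨yy1/2, ss1/2⟩ : ℂ)} + {(⟨yy1/2, -ss1/2⟩ : ℂ)}) +
      ({(⟨yy2/2, ss2/2⟩ : ℂ)} + {(⟨yy2/2, -ss2/2⟩ : ℂ)})) := by
  have n : ∀ a : ℂ, (X - C a) ≠ 0 := fun a => X_sub_C_ne_zero a
  rw [tw_fac,
    Polynomial.roots_mul (mul_ne_zero (n _) (mul_ne_zero (mul_ne_zero (n _) (n _)) (mul_ne_zero (n _) (n _)))),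
    Polynomial.roots_mul (mul_ne_zero (mul_ne_zero (n _) (n _)) (mul_ne_zero (n _) (n _))),
    Polynomial.roots_mul (mul_ne_zero (n _) (n _)),
    Polynomial.roots_mul (mul_ne_zero (n _) (n _)),
    roots_X_sub_C, roots_X_sub_C, roots_X_sub_C, roots_X_sub_C, roots_X_sub_C]

lemma ne_neg_one (y s : ℝ) (hs : 0 < s) : (⟨y/2, s/2⟩ : ℂ) ≠ -1 := by
  intro h
  have := congrArg Complex.im h
  simp at this
  linarith

theorem stmt18 :
    (Matrix.charpoly triangleWalk).rootMultiplicity (-1) = 1 ∧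
    ∀ μ ∈ (Matrix.charpoly triangleWalk).roots, ‖μ‖ = 1 := by
  have ne1 := ne_neg_one yy1 ss1 hs1pos
  have ne2 := ne_neg_one yy2 ss2 hs2pos
  have ne1' : (⟨yy1/2, -ss1/2⟩ : ℂ) ≠ -1 := by
    intro h; have := congrArg Complex.im h; simp at this; exact hs1pos.ne' this
  have ne2' : (⟨yy2/2, -ss2/2⟩ : ℂ) ≠ -1 := by
    intro h; have := congrArg Complex.im h; simp at this; exact hs2pos.ne' this
  constructor
  · rw [← Polynomial.count_roots, tw_roots]
    simp [Multiset.count_singleton, Ne.symm ne1, Ne.symm ne2, Ne.symm ne1', Ne.symm ne2']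
  · intro μ hμ
    rw [tw_roots] at hμ
    simp only [Multiset.mem_add, Multiset.mem_singleton] at hμ
    have habs1' : ‖(⟨yy1/2, -ss1/2⟩ : ℂ)‖ = 1 := by
      have := abs_mk_one yy1 (-ss1) (by rw [neg_pow]; simpa using hs1)
      simpa [neg_div] using this
    have habs2' : ‖(⟨yy2/2, -ss2/2⟩ : ℂ)‖ = 1 := by
      have := abs_mk_one yy2 (-ss2) (by rw [neg_pow]; simpa using hs2)
      simpa [neg_div] using this
    rcases hμ with h | (h | h) | (h | h) <;> subst h
    · simp
    · exact abs_mk_one yy1 ss1 hs1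
    · exact habs1'
    · exact abs_mk_one yy2 ss2 hs2
    · exact habs2'
end
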